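/- Let A be a U×V matrix over the binary field F₂ of rank k. Then there exist ℓ ≤ 2^k − 1 pairs (U_i, V_i) with U_i ⊆ U and V_i ⊆ V such that the sets U_i × V_i are pairwise disjoint and the (a,b)-entry of A equals 1 if and only if (a,b) ∈ U_i × V_i for some i. -/

import Mathlib

theorem stmt1 {U V : Type*} [Fintype U] [Fintype V] (A : Matrix U V (ZMod 2)) :
    ∃ (ℓ : ℕ) (Us : Fin ℓ → Set U) (Vs : Fin ℓ → Set V),
      ℓ ≤ 2 ^ A.rank - 1 ∧
      (∀ i j : Fin ℓ, i ≠ j → Disjoint (Us i ×ˢ Vs i) (Us j ×ˢ Vs j)) ∧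
      ∀ a b, A a b = 1 ↔ ∃ i, a ∈ Us i ∧ b ∈ Vs i := by
  classical
  -- the set of nonzero rows of A
  set F : Finset (V → ZMod 2) := (Finset.univ.image fun a => A a).erase 0 with hF
  set ℓ := F.card with hℓ
  -- span of the rows
  set W : Submodule (ZMod 2) (V → ZMod 2) := Submodule.span (ZMod 2) (Set.range A) with hW
  have hWfin : Module.Finite (ZMod 2) W := Module.Finite.iff_fg.mpr (Submodule.fg_span
    (Set.finite_range A))
  have hcardW : Fintype.card W = 2 ^ A.rank := by
    rw [Module.card_eq_pow_finrank (K := ZMod 2) (V := W), ZMod.card,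
      A.rank_eq_finrank_span_row]
    rfl
  have hle : ℓ ≤ 2 ^ A.rank - 1 := by
    have hmap : ∀ r ∈ F, (if h : r ∈ W then (⟨r, h⟩ : W) else 0) ∈
        (Finset.univ : Finset W).erase 0 := by
      intro r hr
      have hr0 : r ≠ 0 := (Finset.mem_erase.mp hr).1
      have hrW : r ∈ W := by
        obtain ⟨a, -, rfl⟩ := Finset.mem_image.mp (Finset.mem_erase.mp hr).2
        exact Submodule.subset_span ⟨a, rfl⟩
      rw [dif_pos hrW]
      exact Finset.mem_erase.mpr ⟨fun h => hr0 (congrArg Subtype.val h), Finset.mem_univ _⟩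
    have hinj : Set.InjOn (fun r => if h : r ∈ W then (⟨r, h⟩ : W) else 0) F := by
      intro r hr s hs hrs
      have hrW : r ∈ W := by
        obtain ⟨a, -, rfl⟩ := Finset.mem_image.mp (Finset.mem_erase.mp hr).2
        exact Submodule.subset_span ⟨a, rfl⟩
      have hsW : s ∈ W := by
        obtain ⟨a, -, rfl⟩ := Finset.mem_image.mp (Finset.mem_erase.mp hs).2
        exact Submodule.subset_span ⟨a, rfl⟩
      simpa [dif_pos hrW, dif_pos hsW, Subtype.ext_iff] using hrs
    calc ℓ ≤ ((Finset.univ : Finset W).erase 0).card :=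
          Finset.card_le_card_of_injOn _ hmap hinj
      _ = Fintype.card W - 1 := by
          rw [Finset.card_erase_of_mem (Finset.mem_univ _), Finset.card_univ]
      _ = 2 ^ A.rank - 1 := by rw [hcardW]
  -- the indexing
  let e : Fin ℓ ≃ F := F.equivFin.symm
  refine ⟨ℓ, fun i => {a | A a = (e i : V → ZMod 2)}, fun i => {b | (e i : V → ZMod 2) b = 1},
    hle, ?_, ?_⟩
  · intro i j hij
    rw [Set.disjoint_left]
    rintro ⟨a, b⟩ ⟨ha, -⟩ ⟨ha', -⟩
    exact hij (e.injective (Subtype.ext (ha.symm.trans ha')))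
  · intro a b
    constructor
    · intro hab
      have hmem : A a ∈ F := by
        refine Finset.mem_erase.mpr ⟨?_, Finset.mem_image.mpr ⟨a, Finset.mem_univ _, rfl⟩⟩
        intro h
        simp [h] at hab
      refine ⟨e.symm ⟨A a, hmem⟩, ?_, ?_⟩
      · show A a = _
        rw [Equiv.apply_symm_apply]
      · show ((e (e.symm ⟨A a, hmem⟩)) : V → ZMod 2) b = 1
        rw [Equiv.apply_symm_apply]
        exact hab
    · rintro ⟨i, ha, hb⟩
      rw [show A a = (e i : V → ZMod 2) from ha]
      exact hb
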